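/- Let f̃ : ℝ² → ℝ² be a lift of a torus homeomorphism homotopic to the identity, and let K > 0 be such that ‖f̃(x) − x‖ ≤ K/2 and ‖f̃⁻¹(x) − x‖ ≤ K/2 for all x ∈ ℝ². Then for every n ∈ ℕ, the Hausdorff distance between A_n and A_{n+1} is at most 2K/d_n. -/

import Mathlib

open Metric Set Filter Topology

noncomputable section

abbrev E2 : Type := EuclideanSpace ℝ (Fin 2)

/-- The image in `ℝ²` of an integer vector. -/
def intVec (v : Fin 2 → ℤ) : E2 := WithLp.toLp 2 (fun i => (v i : ℝ))

/-- `f` is a lift of a torus homeomorphism homotopic to the identity. -/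
def IsLift (f : E2 → E2) : Prop :=
  ∀ (x : E2) (v : Fin 2 → ℤ), f (x + intVec v) = f x + intVec v

/-- Lift condition for a homeomorphism of the torus whose linear part is the
integer matrix `A`. -/
def IsLiftMat (f : E2 → E2) (A : Matrix (Fin 2) (Fin 2) ℤ) : Prop :=
  ∀ (x : E2) (v : Fin 2 → ℤ), f (x + intVec v) = f x + intVec (A.mulVec v)

/-- Lift condition for a homeomorphism homotopic to the Dehn twist with matrix
`[[1,k₀],[0,1]]`. -/
def IsDehnLift (f : E2 → E2) (k₀ : ℤ) : Prop :=
  (∀ x : E2, f (x + intVec ![1, 0]) = f x + intVec ![1, 0]) ∧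
  (∀ x : E2, f (x + intVec ![0, 1]) = f x + intVec ![k₀, 1])

/-- The fundamental domain `D = [0,1] × [0,1]`. -/
def Dom : Set E2 := {x | x 0 ∈ Icc (0:ℝ) 1 ∧ x 1 ∈ Icc (0:ℝ) 1}

/-- `d_n`, the diameter of `f̃ⁿ(D)`. -/
def dn (f : E2 → E2) (n : ℕ) : ℝ := Metric.diam (f^[n] '' Dom)

/-- `A_n = d_n⁻¹ • (f̃ⁿ(D) − f̃ⁿ(x₀))`. -/
def An (f : E2 → E2) (x₀ : E2) (n : ℕ) : Set E2 :=
  (fun y => (dn f n)⁻¹ • (y - f^[n] x₀)) '' (f^[n] '' Dom)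

/-- A good limit value of the sequence `(A_n)`: a compact set which is the
Hausdorff limit of a subsequence `(A_{n_k})` with `d_{n_k} → +∞`. -/
def IsGoodLimit (f : E2 → E2) (x₀ : E2) (A : Set E2) : Prop :=
  IsCompact A ∧ ∃ nk : ℕ → ℕ, StrictMono nk ∧
    Tendsto (fun k => dn f (nk k)) atTop atTop ∧
    Tendsto (fun k => Metric.hausdorffDist (An f x₀ (nk k)) A) atTop (nhds 0)

/-- A vector of irrational slope: nonzero and not a real multiple of a nonzero
integer vector. -/
def IrrationalSlope (u : E2) : Prop :=
  u ≠ 0 ∧ ¬∃ (t : ℝ) (w : Fin 2 → ℤ), w ≠ 0 ∧ u = t • intVec w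

/-- `f` has bounded deviation from direction `v`. -/
def BoundedDeviation (f : E2 → E2) (v : E2) : Prop :=
  ∃ (ρ : E2) (M : ℝ), 0 ≤ M ∧
    ∀ (x : E2) (n : ℕ), |(inner ℝ (f^[n] x - x - (n : ℝ) • ρ) v : ℝ)| ≤ M

/-- The rotation set of `f`. -/
def rotSet (f : E2 → E2) : Set E2 :=
  {w | ∃ (y : ℕ → E2) (m : ℕ → ℕ), Tendsto m atTop atTop ∧
    Tendsto (fun k => (m k : ℝ)⁻¹ • (f^[m k] (y k) - y k)) atTop (nhds w)}

/-- The line `ℝ•u` through the origin. -/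
def lineThrough (u : E2) : Set E2 := {x | ∃ t : ℝ, x = t • u}

lemma isCompact_Dom : IsCompact Dom := by
  apply Metric.isCompact_of_isClosed_isBounded
  · have : Dom = (fun x : E2 => x 0) ⁻¹' Icc 0 1 ∩ (fun x : E2 => x 1) ⁻¹' Icc 0 1 := rfl
    rw [this]
    exact (isClosed_Icc.preimage (EuclideanSpace.proj (0:Fin 2)).continuous).inter
      (isClosed_Icc.preimage (EuclideanSpace.proj (1:Fin 2)).continuous)
  · apply (Metric.isBounded_closedBall (x := (0:E2)) (r := 2)).subset
    intro x hx
    simp only [Metric.mem_closedBall, dist_zero_right]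
    rw [EuclideanSpace.norm_eq]
    have h0 : ‖x 0‖ ≤ 1 := by rw [Real.norm_eq_abs, abs_le]; exact ⟨by linarith [hx.1.1], hx.1.2⟩
    have h1 : ‖x 1‖ ≤ 1 := by rw [Real.norm_eq_abs, abs_le]; exact ⟨by linarith [hx.2.1], hx.2.2⟩
    have : ∑ i : Fin 2, ‖x i‖ ^ 2 ≤ 4 := by
      rw [Fin.sum_univ_two]; nlinarith [norm_nonneg (x 0), norm_nonneg (x 1)]
    calc Real.sqrt (∑ i : Fin 2, ‖x i‖ ^ 2) ≤ Real.sqrt 4 := Real.sqrt_le_sqrt this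
      _ = 2 := by rw [show (4:ℝ) = 2^2 by norm_num, Real.sqrt_sq (by norm_num)]

lemma isLift_iterate {f : E2 → E2} (hf : IsLift f) (n : ℕ) : IsLift f^[n] := by
  induction n with
  | zero => intro x v; simp
  | succ n ih =>
    intro x v
    rw [Function.iterate_succ_apply', Function.iterate_succ_apply', ih, hf]

lemma isCompact_image_iter (f : E2 ≃ₜ E2) (n : ℕ) : IsCompact ((⇑f)^[n] '' Dom) :=
  isCompact_Dom.image (f.continuous.iterate n)

lemma one_le_dn (f : E2 ≃ₜ E2) (hf : IsLift ⇑f) (n : ℕ) : 1 ≤ dn ⇑f n := by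
  have h0 : (0:E2) ∈ Dom := by constructor <;> simp
  have h1 : intVec ![1,0] ∈ Dom := by constructor <;> simp [intVec]
  have key : (⇑f)^[n] (intVec ![1,0]) = (⇑f)^[n] 0 + intVec ![1,0] := by
    have := isLift_iterate hf n 0 ![1,0]
    rwa [zero_add] at this
  have hd : dist ((⇑f)^[n] (intVec ![1,0])) ((⇑f)^[n] 0) = 1 := by
    rw [key, dist_eq_norm, add_sub_cancel_left, EuclideanSpace.norm_eq]
    have : ∑ i : Fin 2, ‖intVec ![1,0] i‖ ^ 2 = 1 := by
      rw [Fin.sum_univ_two]; simp [intVec]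
    rw [this, Real.sqrt_one]
  have hb := (isCompact_image_iter f n).isBounded
  calc (1:ℝ) = dist ((⇑f)^[n] (intVec ![1,0])) ((⇑f)^[n] 0) := hd.symm
    _ ≤ dn ⇑f n := Metric.dist_le_diam_of_mem hb ⟨_, h1, rfl⟩ ⟨_, h0, rfl⟩

lemma diam_image_le {g : E2 → E2} {K : ℝ} (hK : 0 ≤ K) (hg : ∀ x : E2, ‖g x - x‖ ≤ K / 2)
    {s : Set E2} (hs : Bornology.IsBounded s) :
    Metric.diam (g '' s) ≤ Metric.diam s + K := by
  apply Metric.diam_le_of_forall_dist_le (add_nonneg Metric.diam_nonneg hK)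
  rintro _ ⟨a, ha, rfl⟩ _ ⟨b, hb, rfl⟩
  have h1 : dist (g a) a ≤ K / 2 := by rw [dist_eq_norm]; exact hg a
  have h2 : dist b (g b) ≤ K / 2 := by rw [dist_comm, dist_eq_norm]; exact hg b
  have h3 : dist a b ≤ Metric.diam s := Metric.dist_le_diam_of_mem hs ha hb
  calc dist (g a) (g b) ≤ dist (g a) a + dist a b + dist b (g b) := dist_triangle4 _ _ _ _
    _ ≤ Metric.diam s + K := by linarith

/-- The Hausdorff distance between consecutive rescaled domains `A_n` and
`A_{n+1}` is at most `2K/d_n`, where `K/2` bounds the displacements of `f` and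
`f⁻¹`. -/
theorem hausdorffDist_An_succ (f : E2 ≃ₜ E2) (hf : IsLift ⇑f)
    (x₀ : E2) (hx₀ : x₀ ∈ Dom)
    (K : ℝ) (hK : 0 < K)
    (hKf : ∀ x : E2, ‖f x - x‖ ≤ K / 2)
    (hKf' : ∀ x : E2, ‖f.symm x - x‖ ≤ K / 2) :
    ∀ n : ℕ,
      Metric.hausdorffDist (An ⇑f x₀ n) (An ⇑f x₀ (n + 1)) ≤ 2 * K / dn ⇑f n := by
  intro n
  set S : Set E2 := (⇑f)^[n] '' Dom with hS
  set D : ℝ := dn ⇑f n with hD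
  set D' : ℝ := dn ⇑f (n+1) with hD'
  have hD1 : 1 ≤ D := one_le_dn f hf n
  have hD'1 : 1 ≤ D' := one_le_dn f hf (n+1)
  have hDpos : 0 < D := lt_of_lt_of_le one_pos hD1
  have hD'pos : 0 < D' := lt_of_lt_of_le one_pos hD'1
  have hDne : D ≠ 0 := hDpos.ne'
  have hD'ne : D' ≠ 0 := hD'pos.ne'
  have hT : (⇑f)^[n+1] '' Dom = ⇑f '' S := by
    rw [hS, ← Set.image_comp, Function.iterate_succ']
  have hbS : Bornology.IsBounded S := (isCompact_image_iter f n).isBounded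
  have hbT : Bornology.IsBounded ((⇑f)^[n+1] '' Dom) := (isCompact_image_iter f (n+1)).isBounded
  have hup : D' ≤ D + K := by
    have h := diam_image_le hK.le hKf hbS
    rw [← hT] at h
    exact h
  have hdown : D ≤ D' + K := by
    have hSrec : ⇑f.symm '' ((⇑f)^[n+1] '' Dom) = S := by
      rw [hT, ← Set.image_comp]
      simp
    have h := diam_image_le hK.le hKf' hbT
    rw [hSrec] at h
    exact h
  set a : E2 := (⇑f)^[n] x₀ with ha
  set b : E2 := (⇑f)^[n+1] x₀ with hb
  have hba : b = f a := by rw [hb, ha, Function.iterate_succ_apply']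
  have hinv : |D⁻¹ - D'⁻¹| ≤ K / (D * D') := by
    rw [inv_sub_inv hDne hD'ne, abs_div, abs_of_pos (mul_pos hDpos hD'pos)]
    have habs : |D' - D| ≤ K := abs_sub_le_iff.mpr ⟨by linarith, by linarith⟩
    gcongr
  have key : ∀ y ∈ S, dist (D⁻¹ • (y - a)) (D'⁻¹ • (f y - b)) ≤ 2 * K / D := by
    intro y hy
    have hfy : f y ∈ (⇑f)^[n+1] '' Dom := by rw [hT]; exact ⟨y, hy, rfl⟩
    have hbmem : b ∈ (⇑f)^[n+1] '' Dom := ⟨x₀, hx₀, rfl⟩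
    have h1 : ‖(y - a) - (f y - b)‖ ≤ K := by
      have e : (y - a) - (f y - b) = -(f y - y) + (f a - a) := by rw [hba]; abel
      rw [e]
      calc ‖-(f y - y) + (f a - a)‖ ≤ ‖-(f y - y)‖ + ‖f a - a‖ := norm_add_le _ _
        _ ≤ K/2 + K/2 := by rw [norm_neg]; exact add_le_add (hKf y) (hKf a)
        _ = K := by ring
    have h2 : ‖f y - b‖ ≤ D' := by
      rw [← dist_eq_norm]
      exact Metric.dist_le_diam_of_mem hbT hfy hbmem
    have decomp : D⁻¹ • (y - a) - D'⁻¹ • (f y - b)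
        = D⁻¹ • ((y - a) - (f y - b)) + (D⁻¹ - D'⁻¹) • (f y - b) := by
      module
    rw [dist_eq_norm, decomp]
    calc ‖D⁻¹ • ((y - a) - (f y - b)) + (D⁻¹ - D'⁻¹) • (f y - b)‖
        ≤ ‖D⁻¹ • ((y - a) - (f y - b))‖ + ‖(D⁻¹ - D'⁻¹) • (f y - b)‖ := norm_add_le _ _
      _ = D⁻¹ * ‖(y - a) - (f y - b)‖ + |D⁻¹ - D'⁻¹| * ‖f y - b‖ := by
          rw [norm_smul, norm_smul, Real.norm_eq_abs, Real.norm_eq_abs,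
            abs_of_pos (inv_pos.mpr hDpos)]
      _ ≤ D⁻¹ * K + (K / (D * D')) * D' := by
          apply add_le_add
          · exact mul_le_mul_of_nonneg_left h1 (inv_pos.mpr hDpos).le
          · exact mul_le_mul hinv h2 (norm_nonneg _) (by positivity)
      _ = 2 * K / D := by field_simp; ring
  have hAn : An ⇑f x₀ n = (fun y => D⁻¹ • (y - a)) '' S := rfl
  have hAn' : An ⇑f x₀ (n+1) = (fun y => D'⁻¹ • (y - b)) '' ((⇑f)^[n+1] '' Dom) := rfl
  rw [hAn, hAn']
  apply Metric.hausdorffDist_le_of_mem_dist (by positivity)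
  · rintro _ ⟨y, hy, rfl⟩
    exact ⟨D'⁻¹ • (f y - b), ⟨f y, by rw [hT]; exact ⟨y, hy, rfl⟩, rfl⟩, key y hy⟩
  · rintro _ ⟨z, hz, rfl⟩
    rw [hT] at hz
    obtain ⟨y, hy, rfl⟩ := hz
    exact ⟨D⁻¹ • (y - a), ⟨y, hy, rfl⟩, by rw [dist_comm]; exact key y hy⟩
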